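/- arXiv:2511.23080 — 3 statements merged into one kernel-verified Lean document; each statement's English description precedes it below -/
import Mathlib

section
/- Let K be a field, l ≥ 2 an integer, and V = V_1 ⊕ ... ⊕ V_N a direct sum of finite-dimensional K-vector spaces, with projections pr_i : V → V_i. For alternating l-forms ω_i ∈ ⋀^l V_i*, the form ω = Σ_i pr_i*(ω_i) ∈ ⋀^l V* satisfies rk(ω) = Σ_i rk(ω_i). -/
/-- The contraction map of an alternating `l`-form: `v ↦ v ⌟ ω`, as a function
from `l`-forms to linear maps into `(l-1)`-forms.  For `l = 0` it is zero. -/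
noncomputable def contractMap {K V : Type*} [Field K] [AddCommGroup V] [Module K V] :
    {l : ℕ} → (V [⋀^Fin l]→ₗ[K] K) → (V →ₗ[K] (V [⋀^Fin (l - 1)]→ₗ[K] K))
  | 0, _ => 0
  | (_ + 1), ω => AlternatingMap.curryLeft ω

/-- The rank of an alternating `l`-form `ω`: the rank of the linear map `v ↦ v ⌟ ω`. -/
noncomputable def formRank {K V : Type*} [Field K] [AddCommGroup V] [Module K V]
    {l : ℕ} (ω : V [⋀^Fin l]→ₗ[K] K) : ℕ :=
  Module.finrank K (LinearMap.range (contractMap ω))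

/-- The finrank of a `Submodule.pi` over `Set.univ` is the sum of the finranks. -/
lemma finrank_pi_submodule {K : Type*} [Field K] {ι : Type*} [Fintype ι]
    {M : ι → Type*} [∀ i, AddCommGroup (M i)] [∀ i, Module K (M i)]
    (p : ∀ i, Submodule K (M i)) [∀ i, FiniteDimensional K (p i)] :
    Module.finrank K (Submodule.pi Set.univ p) = ∑ i, Module.finrank K (p i) := by
  have e : (Submodule.pi Set.univ p) ≃ₗ[K] ∀ i, p i :=
    { toFun := fun x i => ⟨x.1 i, x.2 i trivial⟩
      invFun := fun y => ⟨fun i => y i, fun i _ => (y i).2⟩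
      map_add' := fun _ _ => rfl
      map_smul' := fun _ _ => rfl
      left_inv := fun _ => rfl
      right_inv := fun _ => rfl }
  rw [e.finrank_eq, Module.finrank_pi_fintype]


lemma altSum_apply {R M N ι κ : Type*} [CommSemiring R] [AddCommMonoid M] [Module R M]
    [AddCommMonoid N] [Module R N] (s : Finset κ) (f : κ → M [⋀^ι]→ₗ[R] N) (v : ι → M) :
    (∑ i ∈ s, f i) v = ∑ i ∈ s, f i v :=
  map_sum (⟨⟨fun g : M [⋀^ι]→ₗ[R] N => g v, rfl⟩, fun _ _ => rfl⟩ : (M [⋀^ι]→ₗ[R] N) →+ N) f s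

theorem stmt2 {K : Type*} [Field K] {N l : ℕ} (hl : 2 ≤ l)
    (V : Fin N → Type*) [∀ i, AddCommGroup (V i)] [∀ i, Module K (V i)]
    [∀ i, FiniteDimensional K (V i)]
    (ω : ∀ i, (V i) [⋀^Fin l]→ₗ[K] K) :
    formRank (∑ i, (ω i).compLinearMap
        (LinearMap.proj i : ((j : Fin N) → V j) →ₗ[K] V i)) =
      ∑ i, formRank (ω i) := by
  obtain ⟨m, rfl⟩ : ∃ m, l = m + 2 := ⟨l - 2, by omega⟩
  -- The "sum of pullbacks" map on (m+1)-forms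
  set J : (∀ i, (V i) [⋀^Fin (m + 1)]→ₗ[K] K) →ₗ[K]
      (((j : Fin N) → V j) [⋀^Fin (m + 1)]→ₗ[K] K) :=
    { toFun := fun η => ∑ i, (η i).compLinearMap
        (LinearMap.proj i : ((j : Fin N) → V j) →ₗ[K] V i)
      map_add' := by
        intro a b
        ext v
        simp [altSum_apply, Finset.sum_add_distrib]
      map_smul' := by
        intro c a
        ext v
        simp [altSum_apply, Finset.smul_sum] } with hJdef
  have hJinj : Function.Injective J := by
    rw [← LinearMap.ker_eq_bot, LinearMap.ker_eq_bot']
    intro η hη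
    funext i
    ext v
    have := congrArg (fun (f : ((j : Fin N) → V j) [⋀^Fin (m + 1)]→ₗ[K] K) =>
      f (fun k => Pi.single i (v k))) hη
    simp only [hJdef, LinearMap.coe_mk, AddHom.coe_mk, altSum_apply,
      AlternatingMap.compLinearMap_apply, AlternatingMap.zero_apply] at this
    rw [Finset.sum_eq_single i] at this
    · simpa using this
    · intro j _ hj
      have hz : (fun k => (LinearMap.proj j : ((j : Fin N) → V j) →ₗ[K] V j)
          (Pi.single i (v k))) = 0 := by
        funext k
        simp [Pi.single_eq_of_ne hj]
      rw [hz, AlternatingMap.map_zero]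
    · intro h
      exact absurd (Finset.mem_univ i) h
  set Φ : ((j : Fin N) → V j) →ₗ[K] (∀ i, (V i) [⋀^Fin (m + 1)]→ₗ[K] K) :=
    LinearMap.pi (fun i => (contractMap (ω i)).comp
      (LinearMap.proj i : ((j : Fin N) → V j) →ₗ[K] V i)) with hΦdef
  have hC : contractMap (∑ i, (ω i).compLinearMap
      (LinearMap.proj i : ((j : Fin N) → V j) →ₗ[K] V i)) = J.comp Φ := by
    refine LinearMap.ext fun v => ?_
    show AlternatingMap.curryLeftLinearMap (∑ i, (ω i).compLinearMap _) v = J (Φ v)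
    rw [map_sum, LinearMap.sum_apply]
    simp only [hJdef, hΦdef, LinearMap.coe_mk, AddHom.coe_mk, LinearMap.pi_apply,
      LinearMap.comp_apply]
    refine Finset.sum_congr rfl fun i _ => ?_
    exact AlternatingMap.curryLeft_compLinearMap _ _ _
  have hrange : LinearMap.range Φ =
      Submodule.pi Set.univ (fun i => LinearMap.range (contractMap (ω i))) := by
    ext x
    rw [Submodule.mem_pi]
    constructor
    · rintro ⟨v, rfl⟩ i -
      exact ⟨v i, rfl⟩
    · intro hx
      refine ⟨fun i => (hx i trivial).choose, ?_⟩
      funext i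
      exact (hx i trivial).choose_spec
  have h1 : LinearMap.range (contractMap (∑ i, (ω i).compLinearMap
      (LinearMap.proj i : ((j : Fin N) → V j) →ₗ[K] V i))) =
      Submodule.map J (LinearMap.range Φ) := by
    rw [hC, LinearMap.range_comp]
  show Module.finrank K (LinearMap.range (contractMap (∑ i, (ω i).compLinearMap
      (LinearMap.proj i : ((j : Fin N) → V j) →ₗ[K] V i)))) = _
  have h2 : Module.finrank K (Submodule.map J (LinearMap.range Φ)) =
      Module.finrank K (LinearMap.range Φ) :=
    (LinearEquiv.finrank_eq (Submodule.equivMapOfInjective J hJinj (LinearMap.range Φ))).symm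
  rw [h1]
  refine Eq.trans h2 ?_
  rw [hrange, finrank_pi_submodule]
  rfl
end

section
/- Let K be a field, l ≥ 2 an integer, and V = V_1 ⊕ ... ⊕ V_N a direct sum of finite-dimensional K-vector spaces with projections pr_i : V → V_i, where each V_i has dimension l or l+1. Let ω_i ∈ ⋀^l V_i* be nonzero alternating l-forms. Then the tensor rank of ω = Σ_i pr_i*(ω_i) ∈ ⋀^l V* is exactly N. -/
/-- An alternating `l`-form is decomposable if it is the wedge `ξ₁ ∧ ... ∧ ξ_l` of `l`
linear forms, i.e. `ω (v₁, ..., v_l) = det (ξ_i (v_j))`. -/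
def IsDecomposable {K V : Type*} [Field K] [AddCommGroup V] [Module K V]
    {l : ℕ} (ω : V [⋀^Fin l]→ₗ[K] K) : Prop :=
  ∃ ξ : Fin l → (V →ₗ[K] K),
    ω = Matrix.detRowAlternating.compLinearMap (LinearMap.pi ξ)

open Module Function

section Aux

variable {K V : Type*} [Field K] [AddCommGroup V] [Module K V] {l : ℕ}

theorem detRow_comp_apply (ξ : Fin l → (V →ₗ[K] K)) (w : Fin l → V) :
    (Matrix.detRowAlternating.compLinearMap (LinearMap.pi ξ)) w
      = Matrix.det (Matrix.of fun i j => ξ j (w i)) := rfl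

theorem alt_sum_apply {ι : Type*} (s : Finset ι) (f : ι → V [⋀^Fin l]→ₗ[K] K)
    (w : Fin l → V) : (∑ i ∈ s, f i) w = ∑ i ∈ s, (f i) w := by
  classical
  induction s using Finset.induction with
  | empty => simp
  | insert _ _ h ih => rw [Finset.sum_insert h, Finset.sum_insert h, AlternatingMap.add_apply, ih]

theorem IsDecomposable.smul_dec [NeZero l] {ω : V [⋀^Fin l]→ₗ[K] K} (c : K)
    (h : IsDecomposable ω) : IsDecomposable (c • ω) := by
  obtain ⟨ξ, rfl⟩ := h
  refine ⟨Function.update ξ 0 (c • ξ 0), ?_⟩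
  ext w
  rw [AlternatingMap.smul_apply, detRow_comp_apply, detRow_comp_apply, smul_eq_mul]
  have hM : (Matrix.of fun i j => Function.update ξ 0 (c • ξ 0) j (w i))
      = (Matrix.of fun i j => ξ j (w i)).updateCol 0 (c • fun i => ξ 0 (w i)) := by
    ext i j
    rcases eq_or_ne j 0 with rfl | hj
    · simp [Matrix.updateCol_apply]
    · simp [Matrix.updateCol_apply, hj, Function.update_of_ne hj]
  rw [hM, Matrix.det_updateCol_smul]
  congr 1
  rw [show (fun i => ξ 0 (w i)) = fun i => (Matrix.of fun i j => ξ j (w i)) i 0 from rfl,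
    Matrix.updateCol_eq_self]

theorem isDecomposable_zero [NeZero l] : IsDecomposable (0 : V [⋀^Fin l]→ₗ[K] K) := by
  refine ⟨fun _ => 0, ?_⟩
  ext w
  rw [AlternatingMap.zero_apply, AlternatingMap.compLinearMap_apply]
  exact (Matrix.detRowAlternating.map_coord_zero 0 (by ext j; simp)).symm

theorem IsDecomposable.comp {W : Type*} [AddCommGroup W] [Module K W]
    {ω : W [⋀^Fin l]→ₗ[K] K} (h : IsDecomposable ω) (φ : V →ₗ[K] W) :
    IsDecomposable (ω.compLinearMap φ) := by
  obtain ⟨ξ, rfl⟩ := h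
  exact ⟨fun j => (ξ j).comp φ, by ext w; rfl⟩

theorem isDecomposable_basis_det (b : Basis (Fin l) K V) : IsDecomposable b.det := by
  refine ⟨fun j => b.coord j, ?_⟩
  ext w
  rw [Basis.det_apply, detRow_comp_apply, ← Matrix.det_transpose (Matrix.of fun i j => b.coord j (w i))]
  congr 1

theorem isDecomposable_of_finrank_eq [NeZero l] [FiniteDimensional K V]
    (h : finrank K V = l) (ω : V [⋀^Fin l]→ₗ[K] K) : IsDecomposable ω := by
  let b := (Module.finBasis K V).reindex (finCongr h)
  rw [ω.eq_smul_basis_det b]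
  exact (isDecomposable_basis_det b).smul_dec _

end Aux

section Radical

variable {K V : Type*} [Field K] [AddCommGroup V] [Module K V] {l : ℕ} [NeZero l]

/-- The radical of an alternating form: vectors that kill the form when inserted. -/
def radical (f : V [⋀^Fin l]→ₗ[K] K) : Submodule K V where
  carrier := {v | ∀ w : Fin l → V, f (Function.update w 0 v) = 0}
  add_mem' := by
    intro a b ha hb w
    rw [f.map_update_add, ha w, hb w, add_zero]
  zero_mem' := by intro w; rw [f.map_update_zero]
  smul_mem' := by
    intro c x hx w
    rw [f.map_update_smul, hx w, smul_zero]

theorem mem_radical {f : V [⋀^Fin l]→ₗ[K] K} {v : V} :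
    v ∈ radical f ↔ ∀ w : Fin l → V, f (Function.update w 0 v) = 0 := Iff.rfl

theorem radical_apply_eq_zero {f : V [⋀^Fin l]→ₗ[K] K} {v : V} (hv : v ∈ radical f)
    (w : Fin l → V) (s : Fin l) (hw : w s = v) : f w = 0 := by
  have key : ∀ u : Fin l → V, u 0 = v → f u = 0 := by
    intro u hu
    have := hv u
    rwa [← hu, Function.update_eq_self] at this
  rcases eq_or_ne s 0 with rfl | hs
  · exact key w hw
  · have h1 : f (w ∘ Equiv.swap 0 s) = 0 := by
      apply key
      simp [Equiv.swap_apply_left, hw]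
    rw [f.map_swap w (Ne.symm hs)] at h1
    exact neg_eq_zero.mp h1

theorem eq_zero_of_finrank_lt_radical [FiniteDimensional K V]
    {f : V [⋀^Fin l]→ₗ[K] K} (h : finrank K V < finrank K (radical f) + l) : f = 0 := by
  obtain ⟨U, hU⟩ := Submodule.exists_isCompl (radical f)
  have hsum := Submodule.finrank_add_eq_of_isCompl hU
  have hUlt : finrank K U < l := by omega
  have key : ∀ m : ℕ, ∀ w : Fin l → V, (∀ j : Fin l, (j : ℕ) + m < l → w j ∈ U) → f w = 0 := by
    intro m
    induction m with
    | zero =>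
      intro w hw
      have hw' : ∀ j, w j ∈ U := fun j => hw j (by omega)
      refine f.map_linearDependent w fun hli => ?_
      have hli2 : LinearIndependent K (fun j => (⟨w j, hw' j⟩ : U)) :=
        LinearIndependent.of_comp U.subtype hli
      have := hli2.fintype_card_le_finrank
      simp only [Fintype.card_fin] at this
      omega
    | succ m ih =>
      intro w hw
      by_cases hml : m < l
      · set s : Fin l := ⟨l - 1 - m, by omega⟩ with hsdef
        have hsv : (s : ℕ) = l - 1 - m := rfl
        set u : V := (Submodule.linearProjOfIsCompl U (radical f) hU.symm (w s) : V) with hu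
        set rr : V := (Submodule.linearProjOfIsCompl (radical f) U hU (w s) : V) with hr
        have hur : u + rr = w s := by
          rw [hu, hr, add_comm]
          exact Submodule.projection_add_projection_eq_self hU (w s)
        have h1 : f w = f (Function.update w s u) + f (Function.update w s rr) := by
          conv_lhs => rw [← Function.update_eq_self s w, ← hur]
          rw [f.map_update_add]
        have h2 : f (Function.update w s rr) = 0 := by
          refine radical_apply_eq_zero ?_ _ s (Function.update_self _ _ _)
          exact SetLike.coe_mem _
        have h3 : f (Function.update w s u) = 0 := by
          apply ih
          intro j hj
          rcases eq_or_ne j s with rfl | hjs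
          · rw [Function.update_self]; exact SetLike.coe_mem _
          · rw [Function.update_of_ne hjs]
            apply hw j
            have hne : (j : ℕ) ≠ (s : ℕ) := fun hh => hjs (Fin.ext hh)
            rw [hsv] at hne
            omega
        rw [h1, h2, h3, add_zero]
      · exact ih w (fun j hj => absurd hj (by omega))
  ext w
  rw [AlternatingMap.zero_apply]
  exact key l w (fun j hj => absurd hj (by omega))

theorem finrank_radical_add_le [FiniteDimensional K V]
    {f : V [⋀^Fin l]→ₗ[K] K} (hf : f ≠ 0) : finrank K (radical f) + l ≤ finrank K V := by
  by_contra h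
  push_neg at h
  exact hf (eq_zero_of_finrank_lt_radical h)

end Radical

section Succ

variable {K V : Type*} [Field K] [AddCommGroup V] [Module K V]

/-- To prove two alternating `(n+1)`-forms agree, it suffices to check them on the
tuples `e ∘ Fin.succAbove m` for a basis `e` indexed by `Fin (n+2)`. -/
theorem ext_succAbove {n : ℕ} (e : Basis (Fin (n + 2)) K V)
    {f g : V [⋀^Fin (n + 1)]→ₗ[K] K}
    (h : ∀ m : Fin (n + 2), f (e ∘ Fin.succAbove m) = g (e ∘ Fin.succAbove m)) : f = g := by
  classical
  refine Basis.ext_alternating e fun u hu => ?_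
  set S : Finset (Fin (n + 2)) := Finset.univ.image u with hS
  have hcard : S.card = n + 1 := by
    rw [hS, Finset.card_image_of_injective _ hu, Finset.card_univ, Fintype.card_fin]
  set t : Fin (n + 1) → Fin (n + 2) := fun i => (S.orderIsoOfFin hcard i : Fin (n + 2)) with ht
  have htm : StrictMono t := fun i j hij =>
    Subtype.coe_lt_coe.mpr ((S.orderIsoOfFin hcard).strictMono hij)
  -- the missed element
  have hcompl : Sᶜ.card = 1 := by
    rw [Finset.card_compl, hcard, Fintype.card_fin]
    omega
  obtain ⟨m, hm⟩ := Finset.card_eq_one.mp hcompl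
  have hrangeS : Set.range t = (S : Set (Fin (n + 2))) := by
    ext x
    constructor
    · rintro ⟨i, rfl⟩; exact (S.orderIsoOfFin hcard i).2
    · intro hx
      exact ⟨(S.orderIsoOfFin hcard).symm ⟨x, hx⟩, congrArg Subtype.val
        ((S.orderIsoOfFin hcard).apply_symm_apply ⟨x, hx⟩)⟩
  have hrange : Set.range t = Set.range (Fin.succAbove m) := by
    rw [Fin.range_succAbove, hrangeS]
    have : S = {m}ᶜ := by rw [← hm, compl_compl]
    rw [this, Finset.coe_compl, Finset.coe_singleton]
  have htsucc : t = Fin.succAbove m := by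
    haveI : WellFoundedLT (Fin (n + 1)) := Finite.to_wellFoundedLT
    exact (htm.range_inj (Fin.strictMono_succAbove m)).mp hrange
  -- the permutation
  have humem : ∀ i, u i ∈ S := by intro i; rw [hS]; exact Finset.mem_image_of_mem u (Finset.mem_univ i)
  set σ' : Fin (n + 1) → Fin (n + 1) :=
    fun i => (S.orderIsoOfFin hcard).symm ⟨u i, humem i⟩ with hσ'
  have hσinj : Function.Injective σ' := by
    intro a b hab
    apply hu
    have := congrArg (S.orderIsoOfFin hcard) hab
    rw [OrderIso.apply_symm_apply, OrderIso.apply_symm_apply] at this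
    exact congrArg Subtype.val this
  let σ : Equiv.Perm (Fin (n + 1)) :=
    Equiv.ofBijective σ' ((Finite.injective_iff_bijective).mp hσinj)
  have hfact : u = t ∘ σ := by
    funext i
    show u i = t (σ' i)
    rw [ht, hσ']
    exact (congrArg Subtype.val ((S.orderIsoOfFin hcard).apply_symm_apply ⟨u i, humem i⟩)).symm
  have hfam : (fun i => e (u i)) = (e ∘ t) ∘ σ := by
    funext i; rw [hfact]; rfl
  rw [hfam, f.map_perm, g.map_perm, htsucc, h m]

end Succ

section DimSucc

variable {K V : Type*} [Field K] [AddCommGroup V] [Module K V]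

theorem curryLeft_basis_det_decomposable {n : ℕ} (b : Basis (Fin (n + 2)) K V) :
    IsDecomposable (b.det.curryLeft (b 0)) := by
  refine ⟨fun i : Fin (n + 1) => b.coord i.succ, ?_⟩
  ext w
  rw [AlternatingMap.curryLeft_apply_apply, Basis.det_apply, detRow_comp_apply]
  rw [Matrix.det_succ_column_zero]
  have hside : ∀ i ∈ Finset.univ, i ≠ (0 : Fin (n + 2)) →
      (-1 : K) ^ (i : ℕ) * b.toMatrix (Matrix.vecCons (b 0) w) i 0 *
        ((b.toMatrix (Matrix.vecCons (b 0) w)).submatrix i.succAbove Fin.succ).det = 0 := by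
    intro i _ hi
    have : b.toMatrix (Matrix.vecCons (b 0) w) i 0 = 0 := by
      simp [Basis.toMatrix_apply, Basis.repr_self, Finsupp.single_apply, (Ne.symm hi)]
    rw [this, mul_zero, zero_mul]
  rw [Finset.sum_eq_single_of_mem 0 (Finset.mem_univ _) hside]
  have h00 : b.toMatrix (Matrix.vecCons (b 0) w) 0 0 = 1 := by
    simp [Basis.toMatrix_apply]
  rw [h00, Fin.val_zero, pow_zero, one_mul, one_mul, Fin.succAbove_zero]
  rw [← Matrix.det_transpose (Matrix.of fun i j => (b.coord j.succ) (w i))]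
  congr 1

theorem isDecomposable_of_finrank_eq_succ {n : ℕ} [FiniteDimensional K V]
    (h : Module.finrank K V = n + 2) (ω : V [⋀^Fin (n + 1)]→ₗ[K] K) : IsDecomposable ω := by
  classical
  set e : Basis (Fin (n + 2)) K V := (Module.finBasis K V).reindex (finCongr h) with he
  set d : Fin (n + 2) → K := fun m => e.det (Matrix.vecCons (e m) (e ∘ Fin.succAbove m)) with hd
  -- the cons family is a permutation of the basis
  have hdm : ∀ m, d m ≠ 0 := by
    intro m
    set w' : Fin (n + 2) → Fin (n + 2) := Fin.cons m (Fin.succAbove m) with hw'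
    have hw'inj : Function.Injective w' := by
      intro a c hac
      refine Fin.cases (motive := fun a => ∀ c, w' a = w' c → a = c) ?_ ?_ a c hac
      · intro c
        refine Fin.cases ?_ ?_ c
        · intro _; rfl
        · intro i hi
          rw [hw'] at hi
          simp only [Fin.cons_zero, Fin.cons_succ] at hi
          exact absurd hi.symm (Fin.succAbove_ne m i)
      · intro i c
        refine Fin.cases ?_ ?_ c
        · intro hi
          rw [hw'] at hi
          simp only [Fin.cons_zero, Fin.cons_succ] at hi
          exact absurd hi (Fin.succAbove_ne m i)
        · intro j hij
          rw [hw'] at hij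
          simp only [Fin.cons_succ] at hij
          rw [Fin.succAbove_right_injective hij]
    let σ : Equiv.Perm (Fin (n + 2)) :=
      Equiv.ofBijective w' ((Finite.injective_iff_bijective).mp hw'inj)
    have hfam : Matrix.vecCons (e m) (e ∘ Fin.succAbove m) = (fun i => e i) ∘ σ := by
      funext i
      refine Fin.cases ?_ ?_ i
      · rfl
      · intro j; rfl
    rw [hd]
    simp only [hfam]
    rw [e.det.map_perm, Basis.det_self]
    rcases Int.units_eq_one_or (Equiv.Perm.sign σ) with hs | hs <;> rw [hs] <;> simp
  set v : V := ∑ m, ((d m)⁻¹ * ω (e ∘ Fin.succAbove m)) • e m with hv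
  have hkey : e.det.curryLeft v = ω := by
    apply ext_succAbove e
    intro m
    rw [hv, map_sum]
    simp only [map_smul]
    rw [alt_sum_apply]
    have hside : ∀ k ∈ Finset.univ, k ≠ m →
        (((d k)⁻¹ * ω (⇑e ∘ k.succAbove)) • e.det.curryLeft (e k)) (⇑e ∘ m.succAbove) = 0 := by
      intro k _ hk
      rw [AlternatingMap.smul_apply, AlternatingMap.curryLeft_apply_apply]
      have : e.det (Matrix.vecCons (e k) (e ∘ Fin.succAbove m)) = 0 := by
        apply AlternatingMap.map_eq_zero_of_not_injective
        intro hinj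
        obtain ⟨i, hi⟩ : ∃ i, Fin.succAbove m i = k := by
          have : k ∈ Set.range (Fin.succAbove m) := by
            rw [Fin.range_succAbove]; exact hk
          exact this
        have h2 : Matrix.vecCons (e k) (e ∘ Fin.succAbove m) 0
            = Matrix.vecCons (e k) (e ∘ Fin.succAbove m) i.succ := by
          simp only [Matrix.cons_val_zero, Matrix.cons_val_succ]
          rw [show (e ∘ Fin.succAbove m) i = e k from by simp [hi]]
        exact (Fin.succ_ne_zero i).symm (hinj h2)
      rw [this, smul_zero]
    rw [Finset.sum_eq_single_of_mem m (Finset.mem_univ _) hside]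
    rw [AlternatingMap.smul_apply, AlternatingMap.curryLeft_apply_apply, smul_eq_mul]
    have hdd : e.det (Matrix.vecCons (e m) (⇑e ∘ m.succAbove)) = d m := rfl
    rw [hdd, mul_comm, ← mul_assoc, mul_inv_cancel₀ (hdm m), one_mul]
  rcases eq_or_ne v 0 with hv0 | hv0
  · rw [← hkey, hv0, map_zero]
    exact isDecomposable_zero
  · obtain ⟨U, hU⟩ := Submodule.exists_isCompl (K ∙ v)
    have h1 : finrank K (K ∙ v) = 1 := finrank_span_singleton hv0
    have hU2 : finrank K U = n + 1 := by
      have := Submodule.finrank_add_eq_of_isCompl hU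
      omega
    set cU : Basis (Fin (n + 1)) K U := (Module.finBasis K U).reindex (finCongr hU2) with hcU
    have hli : LinearIndependent K (Fin.cons v (fun i => (cU i : V)) : Fin (n + 2) → V) := by
      rw [linearIndependent_fin_cons]
      constructor
      · exact cU.linearIndependent.map' U.subtype U.ker_subtype
      · have hspan : Submodule.span K (Set.range fun i => (cU i : V)) = U := by
          have : (Set.range fun i => (cU i : V)) = U.subtype '' Set.range cU :=
            Set.range_comp _ _
          rw [this, ← Submodule.map_span, cU.span_eq, Submodule.map_top, Submodule.range_subtype]
        rw [hspan]
        intro hvU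
        have hmem : v ∈ (K ∙ v) ⊓ U := ⟨Submodule.mem_span_singleton_self v, hvU⟩
        rw [hU.inf_eq_bot] at hmem
        exact hv0 hmem
    set b : Basis (Fin (n + 2)) K V :=
      basisOfLinearIndependentOfCardEqFinrank hli (by simp [h]) with hb
    have hbc : ⇑b = Fin.cons v (fun i => (cU i : V)) :=
      coe_basisOfLinearIndependentOfCardEqFinrank _ _
    have hb0 : b 0 = v := by rw [hbc]; exact Fin.cons_zero _ _
    have hω : ω = e.det b • (b.det.curryLeft (b 0)) := by
      rw [hb0, ← hkey]
      conv_lhs => rw [e.det.eq_smul_basis_det b]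
      rw [AlternatingMap.curryLeft_smul, LinearMap.smul_apply]
    rw [hω]
    exact (curryLeft_basis_det_decomposable b).smul_dec _

end DimSucc


/-- The tensor rank of an alternating `l`-form: the least `r` such that `ω` is a sum of
`r` decomposable forms (so the tensor rank of `0` is `0`). -/
noncomputable def tensorRank {K V : Type*} [Field K] [AddCommGroup V] [Module K V]
    {l : ℕ} (ω : V [⋀^Fin l]→ₗ[K] K) : ℕ :=
  sInf {r : ℕ | ∃ g : Fin r → (V [⋀^Fin l]→ₗ[K] K),
    (∀ i, IsDecomposable (g i)) ∧ ω = ∑ i, g i}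

theorem stmt6 {K : Type*} [Field K] {N l : ℕ} (hl : 2 ≤ l)
    (V : Fin N → Type*) [∀ i, AddCommGroup (V i)] [∀ i, Module K (V i)]
    [∀ i, FiniteDimensional K (V i)]
    (hdim : ∀ i, Module.finrank K (V i) = l ∨ Module.finrank K (V i) = l + 1)
    (ω : ∀ i, (V i) [⋀^Fin l]→ₗ[K] K) (hω : ∀ i, ω i ≠ 0) :
    tensorRank (∑ i, (ω i).compLinearMap
        (LinearMap.proj i : ((j : Fin N) → V j) →ₗ[K] V i)) = N := by
  classical
  obtain ⟨n, rfl⟩ : ∃ n, l = n + 2 := ⟨l - 2, by omega⟩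
  set Ω : ((j : Fin N) → V j) [⋀^Fin (n + 2)]→ₗ[K] K :=
    ∑ i, (ω i).compLinearMap (LinearMap.proj i) with hΩ
  have hdec : ∀ i, IsDecomposable ((ω i).compLinearMap
      (LinearMap.proj i : ((j : Fin N) → V j) →ₗ[K] V i)) := by
    intro i
    rcases hdim i with hi | hi
    · exact (isDecomposable_of_finrank_eq hi (ω i)).comp _
    · exact (isDecomposable_of_finrank_eq_succ (n := n + 1) hi (ω i)).comp _
  have hmemN : N ∈ {r : ℕ | ∃ g : Fin r → (((j : Fin N) → V j) [⋀^Fin (n + 2)]→ₗ[K] K),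
      (∀ i, IsDecomposable (g i)) ∧ Ω = ∑ i, g i} :=
    ⟨fun i => (ω i).compLinearMap (LinearMap.proj i), hdec, rfl⟩
  refine le_antisymm (Nat.sInf_le hmemN) (le_csInf ⟨N, hmemN⟩ ?_)
  rintro r ⟨g, hg, hsum⟩
  choose ξ hξ using hg
  set Ξ : ((j : Fin N) → V j) →ₗ[K] (Fin r × Fin (n + 2) → K) :=
    LinearMap.pi (fun p => ξ p.1 p.2) with hΞ
  set W := LinearMap.ker Ξ with hW
  -- dimension of W from rank-nullity
  have hW1 : finrank K ((j : Fin N) → V j) ≤ finrank K W + r * (n + 2) := by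
    have h1 := LinearMap.finrank_range_add_finrank_ker Ξ
    rw [← hW] at h1
    have h2 : finrank K (LinearMap.range Ξ) ≤ r * (n + 2) := by
      have := Submodule.finrank_le (LinearMap.range Ξ)
      rwa [Module.finrank_pi, Fintype.card_prod, Fintype.card_fin, Fintype.card_fin] at this
    omega
  -- W is inside the radical of Ω
  have hWrad : W ≤ radical Ω := by
    intro x hx
    intro w
    rw [hsum, alt_sum_apply]
    refine Finset.sum_eq_zero fun k _ => ?_
    rw [hξ k, AlternatingMap.compLinearMap_apply]
    refine Matrix.detRowAlternating.map_coord_zero 0 ?_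
    ext j
    have hx0 : ξ k j x = 0 := congrFun (LinearMap.mem_ker.mp hx) (k, j)
    simpa using hx0
  -- components of radical elements are in the component radicals
  have hcomp : ∀ (x : (j : Fin N) → V j), x ∈ radical Ω → ∀ i, x i ∈ radical (ω i) := by
    intro x hx i
    intro w
    set σ : V i →ₗ[K] ((j : Fin N) → V j) := LinearMap.single K V i with hσ
    have h0 := hx (fun s => σ (w s))
    rw [hΩ, alt_sum_apply] at h0
    have expand : ∀ j, ((ω j).compLinearMap
        (LinearMap.proj j : ((t : Fin N) → V t) →ₗ[K] V j))
          (Function.update (fun s => σ (w s)) 0 x)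
        = ω j (Function.update (fun s => σ (w s) j) 0 (x j)) := by
      intro j
      rw [AlternatingMap.compLinearMap_apply]
      congr 1
      funext s
      rcases eq_or_ne s 0 with rfl | hs
      · simp
      · simp [Function.update_of_ne hs]
    rw [Finset.sum_congr rfl (fun j _ => expand j)] at h0
    have hsingle_i : (fun s => σ (w s) i) = w := by
      funext s; rw [hσ]; simp
    have hoff : ∀ j ∈ Finset.univ, j ≠ i →
        ω j (Function.update (fun s => σ (w s) j) 0 (x j)) = 0 := by
      intro j _ hj
      refine (ω j).map_coord_zero 1 ?_
      have h1ne0 : (1 : Fin (n + 2)) ≠ 0 := by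
        intro hc
        have := congrArg Fin.val hc
        simp at this
      rw [Function.update_of_ne h1ne0, hσ]
      simp [Pi.single_eq_of_ne hj]
    rw [Finset.sum_eq_single_of_mem i (Finset.mem_univ _) hoff] at h0
    rwa [hsingle_i] at h0
  -- injective map from W into the product of radicals
  have hrank2 : finrank K W ≤ ∑ i, finrank K (radical (ω i)) := by
    set R2 : W →ₗ[K] ((i : Fin N) → radical (ω i)) :=
      LinearMap.pi (fun i => LinearMap.codRestrict (radical (ω i))
        ((LinearMap.proj i).comp W.subtype)
        (fun x => hcomp x.1 (hWrad x.2) i)) with hR2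
    have hinj : Function.Injective R2 := by
      rw [← LinearMap.ker_eq_bot]
      apply (Submodule.eq_bot_iff _).mpr
      intro x hx
      have : ∀ i, (x : (j : Fin N) → V j) i = 0 := by
        intro i
        have := congrFun (LinearMap.mem_ker.mp hx) i
        exact congrArg Subtype.val this
      exact Subtype.ext (funext this)
    have := LinearMap.finrank_le_finrank_of_injective hinj
    rwa [Module.finrank_pi_fintype] at this
  have hrank3 : ∀ i, finrank K (radical (ω i)) + (n + 2) ≤ finrank K (V i) :=
    fun i => finrank_radical_add_le (hω i)
  have htot : finrank K ((j : Fin N) → V j) = ∑ i, finrank K (V i) :=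
    Module.finrank_pi_fintype K
  have hsum3 : ∑ i, (finrank K (radical (ω i)) + (n + 2)) ≤ ∑ i, finrank K (V i) :=
    Finset.sum_le_sum (fun i _ => hrank3 i)
  rw [Finset.sum_add_distrib, Finset.sum_const, Finset.card_univ, Fintype.card_fin,
    smul_eq_mul] at hsum3
  have hfinal : N * (n + 2) ≤ r * (n + 2) := by omega
  exact Nat.le_of_mul_le_mul_right hfinal (by omega)
end

section
/- Let K be a field of characteristic 2, V a finite-dimensional K-vector space, a ∈ K a nonzero scalar, and a_1, a_2, a_3, a_4, b_1, b_2, b_3, b_4 ∈ V* linearly independent linear forms. Consider the alternating 3-form η = (a_3 ∧ a_4 + a·(b_3 ∧ b_4)) ∧ (b_2 + a_1) + a_3 ∧ b_4 ∧ (a_2 + a·b_1) + b_3 ∧ a_4 ∧ (a_2 + a·a_1) ∈ ⋀^3 V*. Then rk(η) ≥ 7, and consequently the tensor rank of η is at least 3. -/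
/-- The wedge product `ξ₁ ∧ ξ₂ ∧ ξ₃` of three linear forms, as an alternating `3`-form. -/
noncomputable def wedge3 {K V : Type*} [Field K] [AddCommGroup V] [Module K V]
    (ξ₁ ξ₂ ξ₃ : V →ₗ[K] K) : V [⋀^Fin 3]→ₗ[K] K :=
  Matrix.detRowAlternating.compLinearMap (LinearMap.pi ![ξ₁, ξ₂, ξ₃])

/-! ### Auxiliary material -/

section Aux

open Module

variable {K V : Type*} [Field K] [AddCommGroup V] [Module K V]

/-- Existence of a dual family to a linearly independent family of functionals. -/
theorem exists_dual_family [FiniteDimensional K V]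
    {n : ℕ} (f : Fin n → (V →ₗ[K] K)) (hf : LinearIndependent K f) :
    ∃ e : Fin n → V, ∀ i j, f i (e j) = if i = j then 1 else 0 := by
  classical
  have hs : LinearIndepOn K id (Set.range f) :=
    hf.linearIndepOn_id
  have hext := hs.subset_extend (Set.subset_univ _)
  let B : Basis _ K (Module.Dual K V) := Module.Basis.extend hs
  haveI : Finite (hs.extend (Set.subset_univ _)) :=
    (FiniteDimensional.fintypeBasisIndex B).finite
  haveI : DecidableEq ↑(hs.extend (Set.subset_univ _)) := Classical.decEq _
  have hmem : ∀ j : Fin n, f j ∈ hs.extend (Set.subset_univ _) := fun j =>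
    hext (Set.mem_range_self j)
  refine ⟨fun j => (Module.evalEquiv K V).symm (B.dualBasis ⟨f j, hmem j⟩), ?_⟩
  intro i j
  rw [Module.apply_evalEquiv_symm_apply]
  have hBi : ∀ k : Fin n, B ⟨f k, hmem k⟩ = f k := fun k => Basis.extend_apply_self hs _
  calc B.dualBasis ⟨f j, hmem j⟩ (f i)
      = B.dualBasis ⟨f j, hmem j⟩ (B ⟨f i, hmem i⟩) := by rw [hBi]
    _ = if i = j then 1 else 0 := by
        rw [Basis.dualBasis_apply_self]
        congr 1
        simp only [eq_iff_iff, Subtype.mk.injEq]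
        exact ⟨fun h => hf.injective h, fun h => by rw [h]⟩

/-- The wedge of two linear forms. -/
noncomputable def wedge2 (ξ₁ ξ₂ : V →ₗ[K] K) : V [⋀^Fin 2]→ₗ[K] K :=
  Matrix.detRowAlternating.compLinearMap (LinearMap.pi ![ξ₁, ξ₂])

theorem wedge2_apply (ξ₁ ξ₂ : V →ₗ[K] K) (v : Fin 2 → V) :
    wedge2 ξ₁ ξ₂ v = ξ₁ (v 0) * ξ₂ (v 1) - ξ₁ (v 1) * ξ₂ (v 0) := by
  have : wedge2 ξ₁ ξ₂ v = Matrix.det (Matrix.of fun i j => (![ξ₁, ξ₂] j) (v i)) := rfl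
  rw [this, Matrix.det_fin_two]
  simp [Matrix.of_apply]
  ring

theorem wedge3_apply (ξ₁ ξ₂ ξ₃ : V →ₗ[K] K) (v : Fin 3 → V) :
    wedge3 ξ₁ ξ₂ ξ₃ v =
      ξ₁ (v 0) * ξ₂ (v 1) * ξ₃ (v 2) - ξ₁ (v 0) * ξ₂ (v 2) * ξ₃ (v 1)
      - ξ₁ (v 1) * ξ₂ (v 0) * ξ₃ (v 2) + ξ₁ (v 1) * ξ₂ (v 2) * ξ₃ (v 0)
      + ξ₁ (v 2) * ξ₂ (v 0) * ξ₃ (v 1) - ξ₁ (v 2) * ξ₂ (v 1) * ξ₃ (v 0) := by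
  have : wedge3 ξ₁ ξ₂ ξ₃ v =
      Matrix.det (Matrix.of fun i j => (![ξ₁, ξ₂, ξ₃] j) (v i)) := rfl
  rw [this, Matrix.det_fin_three]
  simp [Matrix.of_apply]
  ring

theorem contract3 (ω : V [⋀^Fin 3]→ₗ[K] K) :
    contractMap ω = AlternatingMap.curryLeft ω := rfl

open Submodule in
theorem formRank_add_le [FiniteDimensional K V] (ω σ : V [⋀^Fin 3]→ₗ[K] K) :
    formRank (ω + σ) ≤ formRank ω + formRank σ := by
  unfold formRank
  rw [contract3, contract3, contract3, AlternatingMap.curryLeft_add]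
  have h1 : LinearMap.range (AlternatingMap.curryLeft ω + AlternatingMap.curryLeft σ) ≤
      LinearMap.range (AlternatingMap.curryLeft ω) ⊔
        LinearMap.range (AlternatingMap.curryLeft σ) := by
    rintro x ⟨y, rfl⟩
    exact add_mem (mem_sup_left ⟨y, rfl⟩) (mem_sup_right ⟨y, rfl⟩)
  exact (Submodule.finrank_mono h1).trans
    (Submodule.finrank_add_le_finrank_add_finrank _ _)

theorem formRank_zero : formRank (0 : V [⋀^Fin 3]→ₗ[K] K) = 0 := by
  unfold formRank
  rw [contract3, AlternatingMap.curryLeft_zero, LinearMap.range_zero, finrank_bot]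

open Submodule in
theorem formRank_decomposable_le (ξ : Fin 3 → (V →ₗ[K] K)) :
    formRank (Matrix.detRowAlternating.compLinearMap (LinearMap.pi ξ)) ≤ 3 := by
  set ω := Matrix.detRowAlternating.compLinearMap (LinearMap.pi ξ) with hω
  set w : Fin 3 → (V [⋀^Fin 2]→ₗ[K] K) :=
    ![wedge2 (ξ 1) (ξ 2), wedge2 (ξ 0) (ξ 2), wedge2 (ξ 0) (ξ 1)] with hw
  have hξ : ![ξ 0, ξ 1, ξ 2] = ξ := by funext i; fin_cases i <;> rfl
  have hcurry : ∀ (x : V), AlternatingMap.curryLeft ω x =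
      (ξ 0 x) • w 0 - (ξ 1 x) • w 1 + (ξ 2 x) • w 2 := by
    intro x
    ext y
    have h3 := wedge3_apply (ξ 0) (ξ 1) (ξ 2) (Matrix.vecCons x y)
    rw [show wedge3 (ξ 0) (ξ 1) (ξ 2) = ω by rw [hω, ← hξ]; rfl] at h3
    simp only [AlternatingMap.curryLeft_apply_apply, AlternatingMap.add_apply,
      AlternatingMap.sub_apply, AlternatingMap.smul_apply, smul_eq_mul, h3, hw,
      wedge2_apply, Matrix.cons_val_zero, Matrix.cons_val_one, Matrix.head_cons,
      Matrix.cons_val_succ, Matrix.cons_val_two, Matrix.tail_cons, Matrix.vecHead,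
      Matrix.vecTail, Function.comp, Fin.succ_zero_eq_one]
    ring
  have hrange : LinearMap.range (contractMap ω) ≤ span K (Set.range w) := by
    rintro _ ⟨x, rfl⟩
    have : contractMap ω x = AlternatingMap.curryLeft ω x := rfl
    rw [this, hcurry x]
    exact add_mem (sub_mem (smul_mem _ _ (subset_span ⟨0, rfl⟩))
      (smul_mem _ _ (subset_span ⟨1, rfl⟩))) (smul_mem _ _ (subset_span ⟨2, rfl⟩))
  have hfin : FiniteDimensional K (span K (Set.range w)) :=
    FiniteDimensional.span_of_finite K (Set.finite_range w)
  calc formRank ω ≤ finrank K (span K (Set.range w)) := Submodule.finrank_mono hrange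
    _ ≤ 3 := (finrank_range_le_card w).trans (by simp)

/-- Index choices for contraction directions. -/
def vv {V : Type*} (e : Fin 8 → V) (r : Fin 7) : V :=
  match r.1 with
  | 0 => e 0 | 1 => e 1 | 2 => e 2 | 3 => e 3 | 4 => e 4 | 5 => e 6 | _ => e 7

/-- First components of the test pairs. -/
def pp {V : Type*} (e : Fin 8 → V) (r : Fin 7) : V :=
  match r.1 with
  | 0 => e 2 | 1 => e 3 | 2 => e 2 | 3 => e 3 | 4 => e 2 | 5 => e 1 | _ => e 1

/-- Second components of the test pairs. -/
def qq {V : Type*} (e : Fin 8 → V) (r : Fin 7) : V :=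
  match r.1 with
  | 0 => e 3 | 1 => e 6 | 2 => e 7 | 3 => e 5 | 4 => e 5 | 5 => e 3 | _ => e 2

/-- The matrix of evaluations. -/
def Wm {K : Type*} [Field K] (a : K) (r c : Fin 7) : K :=
  match r.1, c.1 with
  | 0,0 => 1 | 0,1 => -a | 1,1 => -1 | 1,2 => 1 | 2,3 => 1 | 3,4 => -1
  | 4,2 => a | 5,5 => -1 | 6,6 => 1 | _,_ => 0

set_option maxHeartbeats 4000000 in
theorem key_eval (a : K) (a₁ a₂ a₃ a₄ b₁ b₂ b₃ b₄ : V →ₗ[K] K) (e : Fin 8 → V)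
    (he : ∀ i j, (![a₁, a₂, a₃, a₄, b₁, b₂, b₃, b₄] i) (e j) = if i = j then 1 else 0)
    (r c : Fin 7) :
    (wedge3 a₃ a₄ (b₂ + a₁) + a • wedge3 b₃ b₄ (b₂ + a₁)
        + wedge3 a₃ b₄ (a₂ + a • b₁) + wedge3 b₃ a₄ (a₂ + a • a₁))
      ![vv e r, pp e c, qq e c] = Wm a r c := by
  have h1 : ∀ j, a₁ (e j) = if (0:Fin 8) = j then 1 else 0 := fun j => by simpa using he 0 j
  have h2 : ∀ j, a₂ (e j) = if (1:Fin 8) = j then 1 else 0 := fun j => by simpa using he 1 j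
  have h3 : ∀ j, a₃ (e j) = if (2:Fin 8) = j then 1 else 0 := fun j => by simpa using he 2 j
  have h4 : ∀ j, a₄ (e j) = if (3:Fin 8) = j then 1 else 0 := fun j => by simpa using he 3 j
  have h5 : ∀ j, b₁ (e j) = if (4:Fin 8) = j then 1 else 0 := fun j => by simpa using he 4 j
  have h6 : ∀ j, b₂ (e j) = if (5:Fin 8) = j then 1 else 0 := fun j => by simpa using he 5 j
  have h7 : ∀ j, b₃ (e j) = if (6:Fin 8) = j then 1 else 0 := fun j => by simpa using he 6 j
  have h8 : ∀ j, b₄ (e j) = if (7:Fin 8) = j then 1 else 0 := fun j => by simpa using he 7 j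
  fin_cases r <;> fin_cases c <;>
    simp [vv, pp, qq, Wm, AlternatingMap.add_apply, AlternatingMap.smul_apply, wedge3_apply,
      LinearMap.add_apply, LinearMap.smul_apply, h1, h2, h3, h4, h5, h6, h7, h8,
      Fin.isValue, smul_eq_mul]

/-- Evaluation of a `2`-form at a fixed pair, as a linear map. -/
def evalA (m : Fin 2 → V) : (V [⋀^Fin 2]→ₗ[K] K) →ₗ[K] K where
  toFun ω := ω m
  map_add' _ _ := rfl
  map_smul' _ _ := rfl

end Aux

set_option maxHeartbeats 1000000 in
/-- in characteristic 2, with `a ≠ 0` and linearly independent linear forms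
`a₁, a₂, a₃, a₄, b₁, b₂, b₃, b₄`, the `3`-form
`η = (a₃ ∧ a₄ + a·(b₃ ∧ b₄)) ∧ (b₂ + a₁) + a₃ ∧ b₄ ∧ (a₂ + a·b₁) + b₃ ∧ a₄ ∧ (a₂ + a·a₁)`
has rank at least `7`, and tensor rank at least `3`. -/
theorem stmt12 {K V : Type*} [Field K] [CharP K 2] [AddCommGroup V] [Module K V]
    [FiniteDimensional K V] (a : K) (ha : a ≠ 0)
    (a₁ a₂ a₃ a₄ b₁ b₂ b₃ b₄ : V →ₗ[K] K)
    (hindep : LinearIndependent K ![a₁, a₂, a₃, a₄, b₁, b₂, b₃, b₄]) :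
    7 ≤ formRank (wedge3 a₃ a₄ (b₂ + a₁) + a • wedge3 b₃ b₄ (b₂ + a₁)
        + wedge3 a₃ b₄ (a₂ + a • b₁) + wedge3 b₃ a₄ (a₂ + a • a₁)) ∧
      3 ≤ tensorRank (wedge3 a₃ a₄ (b₂ + a₁) + a • wedge3 b₃ b₄ (b₂ + a₁)
        + wedge3 a₃ b₄ (a₂ + a • b₁) + wedge3 b₃ a₄ (a₂ + a • a₁)) := by
  classical
  obtain ⟨e, he⟩ := exists_dual_family _ hindep
  set η := wedge3 a₃ a₄ (b₂ + a₁) + a • wedge3 b₃ b₄ (b₂ + a₁)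
      + wedge3 a₃ b₄ (a₂ + a • b₁) + wedge3 b₃ a₄ (a₂ + a • a₁) with hη
  have h7 : 7 ≤ formRank η := by
    set Φ : (V [⋀^Fin 2]→ₗ[K] K) →ₗ[K] (Fin 7 → K) :=
      LinearMap.pi (fun c => evalA ![pp e c, qq e c]) with hΦ
    set u : Fin 7 → (Fin 7 → K) := fun r => Φ (contractMap η (vv e r)) with huDef
    have hu : ∀ r c, u r c = Wm a r c := by
      intro r c
      have h0 : u r c = (AlternatingMap.curryLeft η (vv e r)) ![pp e c, qq e c] := rfl
      rw [h0, AlternatingMap.curryLeft_apply_apply]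
      exact key_eval a a₁ a₂ a₃ a₄ b₁ b₂ b₃ b₄ e he r c
    have hui : LinearIndependent K u := by
      rw [Fintype.linearIndependent_iff]
      intro g hg
      have hc : ∀ c : Fin 7, ∑ r, g r * Wm a r c = 0 := by
        intro c
        have := congrFun hg c
        simpa [Finset.sum_apply, Pi.smul_apply, smul_eq_mul, hu] using this
      have e0 := hc 0; have e1 := hc 1; have e2 := hc 2; have e3 := hc 3
      have e4 := hc 4; have e5 := hc 5; have e6 := hc 6
      simp [Fin.sum_univ_seven, Wm] at e0 e1 e2 e3 e4 e5 e6
      have hg0 : g 0 = 0 := e0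
      have hg1 : g 1 = 0 := by
        rw [hg0] at e1; simpa using e1
      have hg4 : g 4 = 0 := by
        rw [hg1] at e2
        have h24 : g 4 = 0 ∨ a = 0 := by simpa using e2
        exact h24.resolve_right ha
      intro i
      fin_cases i
      · exact hg0
      · exact hg1
      · exact e3
      · simpa using e4
      · exact hg4
      · simpa using e5
      · exact e6
    have hspan : Submodule.span K (Set.range u) ≤
        LinearMap.range (Φ ∘ₗ contractMap η) := by
      rw [Submodule.span_le]
      rintro _ ⟨r, rfl⟩
      exact ⟨vv e r, rfl⟩
    have hcard : Module.finrank K (Submodule.span K (Set.range u)) = 7 := by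
      rw [finrank_span_eq_card hui]; simp
    calc (7 : ℕ) = Module.finrank K (Submodule.span K (Set.range u)) := hcard.symm
      _ ≤ Module.finrank K (LinearMap.range (Φ ∘ₗ contractMap η)) :=
          Submodule.finrank_mono hspan
      _ = Module.finrank K ((LinearMap.range (contractMap η)).map Φ) := by
          rw [LinearMap.range_comp]
      _ ≤ Module.finrank K (LinearMap.range (contractMap η)) :=
          Submodule.finrank_map_le Φ _
      _ = formRank η := rfl
  refine ⟨h7, ?_⟩
  -- tensor rank part
  have hsmul : a • wedge3 b₃ b₄ (b₂ + a₁) = wedge3 (a • b₃) b₄ (b₂ + a₁) := by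
    ext v
    simp only [AlternatingMap.smul_apply, wedge3_apply, LinearMap.smul_apply,
      LinearMap.add_apply, smul_eq_mul]
    ring
  have hmem4 : (4 : ℕ) ∈ {r : ℕ | ∃ g : Fin r → (V [⋀^Fin 3]→ₗ[K] K),
      (∀ i, IsDecomposable (g i)) ∧ η = ∑ i, g i} := by
    refine ⟨![wedge3 a₃ a₄ (b₂ + a₁), wedge3 (a • b₃) b₄ (b₂ + a₁),
      wedge3 a₃ b₄ (a₂ + a • b₁), wedge3 b₃ a₄ (a₂ + a • a₁)], ?_, ?_⟩
    · intro i
      fin_cases i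
      · exact ⟨![a₃, a₄, b₂ + a₁], rfl⟩
      · exact ⟨![a • b₃, b₄, b₂ + a₁], rfl⟩
      · exact ⟨![a₃, b₄, a₂ + a • b₁], rfl⟩
      · exact ⟨![b₃, a₄, a₂ + a • a₁], rfl⟩
    · rw [hη, hsmul, Fin.sum_univ_four]
      simp
  unfold tensorRank
  by_contra hlt
  push_neg at hlt
  have hne : ({r : ℕ | ∃ g : Fin r → (V [⋀^Fin 3]→ₗ[K] K),
      (∀ i, IsDecomposable (g i)) ∧ η = ∑ i, g i}).Nonempty := ⟨4, hmem4⟩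
  have key : ∀ m ∈ {r : ℕ | ∃ g : Fin r → (V [⋀^Fin 3]→ₗ[K] K),
      (∀ i, IsDecomposable (g i)) ∧ η = ∑ i, g i}, ¬ (m < 3) := by
    intro m hm hm3
    have hm2 : m ≤ 2 := Nat.lt_succ_iff.mp hm3
    interval_cases m
    · obtain ⟨g, hdec, hsum⟩ := hm
      have hzero : η = 0 := by rw [hsum]; simp
      rw [hzero, formRank_zero] at h7
      exact absurd h7 (by norm_num)
    · obtain ⟨g, hdec, hsum⟩ := hm
      obtain ⟨ξ, hξ⟩ := hdec 0
      rw [hsum, Fin.sum_univ_one, hξ] at h7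
      have h37 := formRank_decomposable_le ξ
      exact absurd (h7.trans h37) (by norm_num)
    · obtain ⟨g, hdec, hsum⟩ := hm
      obtain ⟨ξ0, hξ0⟩ := hdec 0
      obtain ⟨ξ1, hξ1⟩ := hdec 1
      rw [hsum, Fin.sum_univ_two, hξ0, hξ1] at h7
      have h1 := formRank_add_le (K := K) (V := V)
        (Matrix.detRowAlternating.compLinearMap (LinearMap.pi ξ0))
        (Matrix.detRowAlternating.compLinearMap (LinearMap.pi ξ1))
      have h2 := formRank_decomposable_le ξ0
      have h3 := formRank_decomposable_le ξ1
      exact absurd (h7.trans (h1.trans (Nat.add_le_add h2 h3))) (by norm_num)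
  exact key _ (Nat.sInf_mem hne) hlt
end
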